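/- (McDiarmid's bounded differences inequality) Let X₁,…,Xₙ be independent random variables with Xᵢ taking values in a set Aᵢ, and let f : ∏ Aᵢ → ℝ be measurable such that |f(x) − f(x′)| ≤ cᵢ whenever x and x′ differ only in the i-th coordinate. Then for every ε > 0, P(f(X₁,…,Xₙ) − E f > ε) ≤ exp(−2ε² / Σᵢ cᵢ²). -/

import Mathlib

open MeasureTheory ProbabilityTheory Real

/-- Key inequality behind Hoeffding's lemma. -/
theorem hoeffding_key {p : ℝ} (hp0 : 0 ≤ p) (hp1 : p ≤ 1) (h : ℝ) :
    1 - p + p * exp h ≤ exp (p * h + h ^ 2 / 8) := by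
  set D : ℝ → ℝ := fun x => 1 - p + p * exp x with hDdef
  have hD : ∀ x, 0 < D x := by
    intro x
    have he := exp_pos x
    rcases eq_or_lt_of_le hp1 with hp | hp
    · simpa [hDdef, hp] using he
    · have : 0 ≤ p * exp x := mul_nonneg hp0 he.le
      simp only [hDdef]; linarith
  set F : ℝ → ℝ := fun x => x ^ 2 / 8 + p * x - log (D x) with hFdef
  set F1 : ℝ → ℝ := fun x => x / 4 + p - p * exp x / D x with hF1def
  have hDd : ∀ x, HasDerivAt D (p * exp x) x := by
    intro x
    exact ((Real.hasDerivAt_exp x).const_mul p).const_add (1 - p)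
  have hFd : ∀ x, HasDerivAt F (F1 x) x := by
    intro x
    have h1 : HasDerivAt (fun y : ℝ => y ^ 2 / 8) (x / 4) x := by
      simpa [mul_comm] using (hasDerivAt_pow 2 x).div_const 8 |>.congr_deriv (by ring)
    have h2 : HasDerivAt (fun y : ℝ => p * y) p x := by
      simpa using (hasDerivAt_id x).const_mul p
    have h3 : HasDerivAt (fun y => log (D y)) (p * exp x / D x) x :=
      (hDd x).log (hD x).ne'
    exact (h1.add h2).sub h3
  have hF1d : ∀ x, HasDerivAt F1 (1/4 - p * exp x * (1 - p) / (D x) ^ 2) x := by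
    intro x
    have h1 : HasDerivAt (fun y : ℝ => y / 4 + p) (1/4) x := by
      simpa using ((hasDerivAt_id x).div_const 4).add_const p
    have h2 : HasDerivAt (fun y => p * exp y / D y)
        ((p * exp x * D x - p * exp x * (p * exp x)) / (D x) ^ 2) x :=
      HasDerivAt.div ((Real.hasDerivAt_exp x).const_mul p) (hDd x) (hD x).ne'
    have h2' : HasDerivAt (fun y => p * exp y / D y) (p * exp x * (1 - p) / (D x) ^ 2) x := by
      convert h2 using 1
      simp only [hDdef]; ring
    exact h1.sub h2'
  have hF2 : ∀ x, (0:ℝ) ≤ 1/4 - p * exp x * (1 - p) / (D x) ^ 2 := by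
    intro x
    have hDx := hD x
    have key : p * exp x * (1 - p) / (D x) ^ 2 ≤ 1/4 := by
      rw [div_le_iff₀ (by positivity)]
      have : (D x) ^ 2 = (1 - p + p * exp x) ^ 2 := by simp [hDdef]
      nlinarith [sq_nonneg (1 - p - p * exp x), this]
    linarith
  have hF1mono : Monotone F1 :=
    monotone_of_deriv_nonneg (fun x => (hF1d x).differentiableAt) (fun x => by
      rw [(hF1d x).deriv]; exact hF2 x)
  have hF10 : F1 0 = 0 := by
    have : D 0 = 1 := by simp [hDdef]
    simp [hF1def, this]
  have hF0 : F 0 = 0 := by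
    have : D 0 = 1 := by simp [hDdef]
    simp [hFdef, this]
  have hFnonneg : 0 ≤ F h := by
    rcases le_total h 0 with hh | hh
    · have hanti : AntitoneOn F (Set.Iic 0) := by
        refine antitoneOn_of_deriv_nonpos (convex_Iic 0)
          (fun x _ => (hFd x).continuousAt.continuousWithinAt)
          (fun x _ => (hFd x).differentiableAt.differentiableWithinAt) (fun x hx => ?_)
        rw [(hFd x).deriv, ← hF10]
        exact hF1mono (le_of_lt (by simpa using hx))
      have := hanti (Set.mem_Iic.2 hh) (Set.mem_Iic.2 le_rfl) hh
      rwa [hF0] at this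
    · have hmono : MonotoneOn F (Set.Ici 0) := by
        refine monotoneOn_of_deriv_nonneg (convex_Ici 0)
          (fun x _ => (hFd x).continuousAt.continuousWithinAt)
          (fun x _ => (hFd x).differentiableAt.differentiableWithinAt) (fun x hx => ?_)
        rw [(hFd x).deriv, ← hF10]
        exact hF1mono (le_of_lt (by simpa using hx))
      have := hmono (Set.mem_Ici.2 le_rfl) (Set.mem_Ici.2 hh) hh
      rwa [hF0] at this
  have hlog : log (D h) ≤ p * h + h ^ 2 / 8 := by
    have h0 : (0:ℝ) ≤ h ^ 2 / 8 + p * h - log (D h) := hFnonneg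
    linarith
  calc D h ≤ exp (log (D h)) := by rw [exp_log (hD h)]
    _ ≤ exp (p * h + h ^ 2 / 8) := exp_le_exp.2 hlog

open MeasureTheory

/-- Bounded measurable functions are integrable on finite measures. -/
theorem integrable_of_abs_le {α : Type*} [MeasurableSpace α] (ν : Measure α)
    [IsFiniteMeasure ν] {φ : α → ℝ} (hφ : Measurable φ) {C : ℝ} (h : ∀ x, |φ x| ≤ C) :
    Integrable φ ν := by
  refine (integrable_const C).mono' hφ.aestronglyMeasurable ?_
  filter_upwards with x using by simpa [Real.norm_eq_abs] using h x

/-- Hoeffding's lemma, oscillation form. -/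
theorem hoeffding_lemma {α : Type*} [MeasurableSpace α] (ν : Measure α)
    [IsProbabilityMeasure ν] {g : α → ℝ} (hg : Measurable g) {c : ℝ}
    (hosc : ∀ x y, |g x - g y| ≤ c) (t : ℝ) :
    ∫ x, exp (t * g x) ∂ν ≤ exp (t * ∫ x, g x ∂ν + t ^ 2 * c ^ 2 / 8) := by
  have hne : Nonempty α := by
    by_contra hempty
    have : ν Set.univ = 0 := by
      simp [Set.univ_eq_empty_iff.2 (not_nonempty_iff.1 hempty)]
    simp [measure_univ] at this
  obtain ⟨x₀⟩ := id hne
  have hc0 : 0 ≤ c := by simpa using hosc x₀ x₀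
  -- upper and lower bounds
  have hbdd : BddAbove (Set.range g) := by
    refine ⟨g x₀ + c, fun z hz => ?_⟩
    obtain ⟨x, rfl⟩ := hz
    have := hosc x x₀
    have := abs_le.1 this
    linarith [this.2]
  set b : ℝ := ⨆ x, g x with hbdef
  set a : ℝ := b - c with hadef
  have hub : ∀ x, g x ≤ b := fun x => le_ciSup hbdd x
  have hlb : ∀ x, a ≤ g x := by
    intro x
    have : b ≤ g x + c := ciSup_le fun y => by
      have := abs_le.1 (hosc y x); linarith [this.2]
    simp only [hadef]; linarith
  have hba : b - a = c := by simp [hadef]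
  -- integrability
  have hgint : Integrable g ν :=
    integrable_of_abs_le ν hg (C := max |a| |b|) fun x =>
      abs_le.2 ⟨by have := hlb x; have := neg_abs_le a; linarith [le_max_left |a| |b|],
        by have := hub x; linarith [le_abs_self b, le_max_right |a| |b|]⟩
  set m : ℝ := ∫ x, g x ∂ν with hmdef
  have hma : a ≤ m := by
    have : ∫ _x, a ∂ν ≤ ∫ x, g x ∂ν := integral_mono (integrable_const a) hgint hlb
    simpa using this
  have hmb : m ≤ b := by
    have : ∫ x, g x ∂ν ≤ ∫ _x, b ∂ν := integral_mono hgint (integrable_const b) hub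
    simpa using this
  rcases eq_or_lt_of_le hc0 with hc | hc
  · -- c = 0 : g is constant
    have hconst : ∀ x, g x = b := fun x => le_antisymm (hub x) (by have := hlb x; rw [hadef, ← hc] at this; linarith)
    have hm : m = b := by
      rw [hmdef]
      have : (fun x => g x) = fun _ => b := funext hconst
      rw [this]; simp
    have : ∫ x, exp (t * g x) ∂ν = exp (t * b) := by
      have : (fun x => exp (t * g x)) = fun _ => exp (t * b) := by
        funext x; rw [hconst x]
      rw [this]; simp
    rw [this, hm, ← hc]
    simp
  · -- c > 0, so a < b
    have hab : a < b := by rw [hadef]; linarith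
    set p : ℝ := (m - a) / (b - a) with hpdef
    have hp0 : 0 ≤ p := div_nonneg (by linarith) (by linarith)
    have hp1 : p ≤ 1 := by
      rw [hpdef, div_le_one (by linarith)]; linarith
    -- pointwise convexity bound
    have hpt : ∀ x, exp (t * g x) ≤
        ((b - g x) * exp (t * a) + (g x - a) * exp (t * b)) / (b - a) := by
      intro x
      have hd : b - a ≠ 0 := sub_ne_zero.2 hab.ne'
      have h1 : ((b - g x) / (b - a)) • (t * a) + ((g x - a) / (b - a)) • (t * b) = t * g x := by
        simp only [smul_eq_mul]
        rw [div_mul_eq_mul_div, div_mul_eq_mul_div, ← add_div,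
          div_eq_iff hd]
        ring
      have w1 : (0:ℝ) ≤ (b - g x) / (b - a) := div_nonneg (by linarith [hub x]) (by linarith)
      have w2 : (0:ℝ) ≤ (g x - a) / (b - a) := div_nonneg (by linarith [hlb x]) (by linarith)
      have w3 : (b - g x) / (b - a) + (g x - a) / (b - a) = 1 := by
        rw [← add_div, div_eq_one_iff_eq hd]; ring
      have h2 := convexOn_exp.2 (Set.mem_univ (t * a)) (Set.mem_univ (t * b)) w1 w2 w3
      rw [h1] at h2
      calc exp (t * g x) ≤ (b - g x) / (b - a) * exp (t * a) + (g x - a) / (b - a) * exp (t * b) := by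
            simpa [smul_eq_mul] using h2
        _ = ((b - g x) * exp (t * a) + (g x - a) * exp (t * b)) / (b - a) := by ring
    -- integrate
    have hint1 : Integrable (fun x => exp (t * g x)) ν := by
      refine integrable_of_abs_le ν (by fun_prop) (C := max (exp (t*a)) (exp (t*b))) fun x => ?_
      rw [abs_of_pos (exp_pos _)]
      rcases le_total t 0 with ht | ht
      · exact le_max_of_le_left (exp_le_exp.2 (by nlinarith [hlb x]))
      · exact le_max_of_le_right (exp_le_exp.2 (by nlinarith [hub x]))
    have hfeq : (fun x => ((b - g x) * exp (t * a) + (g x - a) * exp (t * b)) / (b - a))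
        = fun x => (g x * (exp (t * b) - exp (t * a)) + (b * exp (t * a) - a * exp (t * b))) / (b - a) := by
      funext x; ring
    have hint2 : Integrable (fun x => ((b - g x) * exp (t * a) + (g x - a) * exp (t * b)) / (b - a)) ν := by
      rw [hfeq]
      exact ((hgint.mul_const _).add (integrable_const _)).div_const _
    have hI : ∫ x, exp (t * g x) ∂ν ≤ ((b - m) * exp (t * a) + (m - a) * exp (t * b)) / (b - a) := by
      calc ∫ x, exp (t * g x) ∂ν
          ≤ ∫ x, ((b - g x) * exp (t * a) + (g x - a) * exp (t * b)) / (b - a) ∂ν :=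
            integral_mono hint1 hint2 hpt
        _ = ((b - m) * exp (t * a) + (m - a) * exp (t * b)) / (b - a) := by
            rw [hfeq, integral_div, integral_add (hgint.mul_const _) (integrable_const _),
              integral_mul_const, integral_const]
            simp only [probReal_univ, ENNReal.toReal_one, smul_eq_mul, one_mul]
            rw [div_eq_div_iff (sub_ne_zero.2 hab.ne') (sub_ne_zero.2 hab.ne')]
            ring
    have hkey := hoeffding_key hp0 hp1 (t * (b - a))
    have e1 : exp (t * a) * (1 - p + p * exp (t * (b - a)))
        = ((b - m) * exp (t * a) + (m - a) * exp (t * b)) / (b - a) := by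
      calc exp (t * a) * (1 - p + p * exp (t * (b - a)))
          = (1 - p) * exp (t * a) + p * (exp (t * a) * exp (t * (b - a))) := by ring
        _ = (1 - p) * exp (t * a) + p * exp (t * b) := by rw [← exp_add]; ring_nf
        _ = ((b - m) * exp (t * a) + (m - a) * exp (t * b)) / (b - a) := by
            rw [hpdef, eq_div_iff (sub_ne_zero.2 hab.ne')]
            field_simp [hc.ne', sub_ne_zero.2 hab.ne']
            ring
    have e2 : t * a + (p * (t * (b - a)) + (t * (b - a)) ^ 2 / 8) = t * m + t ^ 2 * c ^ 2 / 8 := by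
      have hp' : p * (b - a) = m - a := by
        rw [hpdef, div_mul_cancel₀ _ (sub_ne_zero.2 hab.ne')]
      have h2 : (t * (b - a)) ^ 2 = t ^ 2 * c ^ 2 := by rw [mul_pow, hba]
      have h3 : p * (t * (b - a)) = t * (m - a) := by
        rw [show p * (t * (b - a)) = t * (p * (b - a)) by ring, hp']
      rw [h3, h2]; ring
    have hfin : ((b - m) * exp (t * a) + (m - a) * exp (t * b)) / (b - a)
        ≤ exp (t * m + t ^ 2 * c ^ 2 / 8) := by
      rw [← e1]
      calc exp (t * a) * (1 - p + p * exp (t * (b - a)))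
          ≤ exp (t * a) * exp (p * (t * (b - a)) + (t * (b - a)) ^ 2 / 8) :=
            mul_le_mul_of_nonneg_left hkey (exp_pos _).le
        _ = exp (t * a + (p * (t * (b - a)) + (t * (b - a)) ^ 2 / 8)) := by rw [← exp_add]
        _ = exp (t * m + t ^ 2 * c ^ 2 / 8) := by rw [e2]
    exact hI.trans hfin

/-- Bounded differences imply bounded global oscillation. -/
theorem osc_of_bdd_diff {n : ℕ} {A : Fin n → Type*} (f : (∀ i, A i) → ℝ) (c : Fin n → ℝ)
    (hbd : ∀ (x x' : ∀ i, A i) (i : Fin n),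
      (∀ j, j ≠ i → x j = x' j) → |f x - f x'| ≤ c i) :
    ∀ x y, |f x - f y| ≤ ∑ i, c i := by
  suffices H : ∀ s : Finset (Fin n), ∀ x y, (∀ j, j ∉ s → x j = y j) →
      |f x - f y| ≤ ∑ i ∈ s, c i by
    intro x y
    exact H Finset.univ x y (fun j hj => absurd (Finset.mem_univ j) hj)
  intro s
  induction s using Finset.induction_on with
  | empty =>
    intro x y hxy
    have : x = y := funext fun j => hxy j (Finset.notMem_empty j)
    simp [this]
  | @insert a s ha ih =>
    intro x y hxy
    set x' := Function.update x a (y a) with hx'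
    have h1 : |f x - f x'| ≤ c a := by
      refine hbd x x' a fun j hj => ?_
      rw [hx', Function.update_of_ne hj]
    have h2 : |f x' - f y| ≤ ∑ i ∈ s, c i := by
      refine ih x' y fun j hj => ?_
      rcases eq_or_ne j a with rfl | hja
      · rw [hx', Function.update_self]
      · rw [hx', Function.update_of_ne hja]
        exact hxy j (by simp [hja, hj])
    rw [Finset.sum_insert ha]
    calc |f x - f y| ≤ |f x - f x'| + |f x' - f y| := abs_sub_le _ _ _
      _ ≤ c a + ∑ i ∈ s, c i := add_le_add h1 h2

universe u

/-- Tensorized mgf bound for product measures. -/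
theorem mgf_pi : ∀ {n : ℕ} {A : Fin n → Type u} [inst : ∀ i, MeasurableSpace (A i)]
    (ν : ∀ i, Measure (A i)) [∀ i, IsProbabilityMeasure (ν i)]
    (f : (∀ i, A i) → ℝ) (_hf : Measurable f) (c : Fin n → ℝ)
    (_hbd : ∀ (x x' : ∀ i, A i) (i : Fin n),
      (∀ j, j ≠ i → x j = x' j) → |f x - f x'| ≤ c i) (t : ℝ),
    ∫ x, exp (t * f x) ∂Measure.pi ν
      ≤ exp (t * ∫ x, f x ∂Measure.pi ν + t ^ 2 * (∑ i, c i ^ 2) / 8) := by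
  intro n
  induction n with
  | zero =>
    intro A inst ν hν f hf c hbd t
    have hx : ∀ x : ∀ i, A i, x = (default : ∀ i, A i) := fun x => Subsingleton.elim x _
    have h1 : ∫ x, exp (t * f x) ∂Measure.pi ν = exp (t * f default) := by
      have : (fun x => exp (t * f x)) = fun _ => exp (t * f default) := by
        funext x; rw [hx x]
      rw [this, integral_const]; simp
    have h2 : ∫ x, f x ∂Measure.pi ν = f default := by
      have : (fun x => f x) = fun _ => f default := by funext x; rw [hx x]
      rw [this, integral_const]; simp
    rw [h1, h2]
    simp
  | succ n ih =>
    intro A inst ν hν f hf c hbd t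
    set e := MeasurableEquiv.piFinSuccAbove A 0 with hedef
    have hmp := measurePreserving_piFinSuccAbove ν 0
    set ν' : Measure (∀ j : Fin n, A ((0 : Fin (n+1)).succAbove j)) :=
      Measure.pi fun j => ν ((0 : Fin (n+1)).succAbove j) with hν'def
    haveI : ∀ j : Fin n, IsProbabilityMeasure (ν ((0 : Fin (n+1)).succAbove j)) := fun j => hν _
    haveI hν'P : IsProbabilityMeasure ν' := by
      rw [hν'def]
      haveI : ∀ j : Fin n, IsProbabilityMeasure (ν ((0 : Fin (n+1)).succAbove j)) := fun j => hν _
      infer_instance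
    set g : A 0 × (∀ j : Fin n, A ((0 : Fin (n+1)).succAbove j)) → ℝ := fun z => f (e.symm z)
      with hgdef
    have hgm : Measurable g := hf.comp e.symm.measurable
    -- boundedness of f
    obtain ⟨x₀⟩ : Nonempty (∀ i, A i) := by
      have : ∀ i, Nonempty (A i) := fun i => by
        by_contra hi
        have : ν i Set.univ = 0 := by
          simp [Set.univ_eq_empty_iff.2 (not_nonempty_iff.1 hi)]
        simp [measure_univ] at this
      exact ⟨fun i => Classical.arbitrary _⟩
    have hosc := osc_of_bdd_diff f c hbd
    have hfbd : ∀ x, |f x| ≤ |f x₀| + ∑ i, c i := fun x => by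
      have := hosc x x₀
      calc |f x| = |f x - f x₀ + f x₀| := by ring_nf
        _ ≤ |f x - f x₀| + |f x₀| := abs_add_le _ _
        _ ≤ |f x₀| + ∑ i, c i := by linarith
    set B : ℝ := |f x₀| + ∑ i, c i with hBdef
    have hgbd : ∀ z, |g z| ≤ B := fun z => hfbd _
    -- integrability of exp (t * g) on the product measure
    have hFm : Measurable fun z => exp (t * g z) := (hgm.const_mul t).exp
    have hFint : Integrable (fun z => exp (t * g z)) ((ν 0).prod ν') := by
      refine integrable_of_abs_le _ hFm (C := exp (|t| * B)) fun z => ?_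
      rw [abs_of_pos (exp_pos _)]
      refine exp_le_exp.2 ?_
      calc t * g z ≤ |t * g z| := le_abs_self _
        _ = |t| * |g z| := abs_mul _ _
        _ ≤ |t| * B := by
            have hB0 : (0:ℝ) ≤ B := le_trans (abs_nonneg _) (hgbd z)
            exact mul_le_mul_of_nonneg_left (hgbd z) (abs_nonneg t)
    have hgint : Integrable g ((ν 0).prod ν') := integrable_of_abs_le _ hgm hgbd
    -- transfer integrals through the measurable equivalence
    have hstep1 : ∫ x, exp (t * f x) ∂Measure.pi ν = ∫ z, exp (t * g z) ∂((ν 0).prod ν') := by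
      rw [← hmp.integral_comp' (fun z => exp (t * g z))]
      congr 1
      funext x
      exact congrArg (fun z => exp (t * f z)) (e.symm_apply_apply x).symm
    have hmean : ∫ x, f x ∂Measure.pi ν = ∫ z, g z ∂((ν 0).prod ν') := by
      rw [← hmp.integral_comp' (fun z => g z)]
      congr 1
      funext x
      exact congrArg f (e.symm_apply_apply x).symm
    -- coordinates of the inverse equivalence
    have hco : ∀ (x0 : A 0) (y : ∀ j, A ((0 : Fin (n+1)).succAbove j)),
        (e.symm (x0, y) 0 = x0) ∧ ∀ j, e.symm (x0, y) ((0 : Fin (n+1)).succAbove j) = y j := by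
      intro x0 y
      constructor
      · exact Fin.insertNth_apply_same (α := A) 0 x0 y
      · intro j
        exact Fin.insertNth_apply_succAbove (α := A) 0 x0 y j
    -- bounded differences in the remaining coordinates
    have hbd1 : ∀ (x0 : A 0) (y y' : ∀ j, A ((0 : Fin (n+1)).succAbove j)) (j : Fin n),
        (∀ k, k ≠ j → y k = y' k) →
        |g (x0, y) - g (x0, y')| ≤ c ((0 : Fin (n+1)).succAbove j) := by
      intro x0 y y' j hyy
      refine hbd _ _ _ fun j' hj' => ?_
      rcases Fin.eq_zero_or_eq_succ j' with rfl | ⟨k, rfl⟩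
      · rw [(hco x0 y).1, (hco x0 y').1]
      · have hk : k.succ = (0 : Fin (n+1)).succAbove k := (Fin.zero_succAbove k).symm
        have hkj : k ≠ j := by
          intro h; apply hj'; rw [h, Fin.zero_succAbove]
        rw [hk, (hco x0 y).2 k, (hco x0 y').2 k, hyy k hkj]
    -- the inner conditional mean
    set h : A 0 → ℝ := fun x0 => ∫ y, g (x0, y) ∂ν' with hhdef
    have hhm : Measurable h :=
      (hgm.stronglyMeasurable.integral_prod_right').measurable
    have hginner : ∀ x0 : A 0, Integrable (fun y => g (x0, y)) ν' :=
      fun x0 => integrable_of_abs_le _ (hgm.comp measurable_prodMk_left) (fun y => hgbd _)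
    have hhbd : ∀ x0, |h x0| ≤ B := by
      intro x0
      calc |h x0| ≤ ∫ y, |g (x0, y)| ∂ν' := by
            simpa [Real.norm_eq_abs, hhdef] using norm_integral_le_integral_norm (fun y => g (x0, y)) (μ := ν')
        _ ≤ ∫ _y, B ∂ν' := integral_mono (hginner x0).abs (integrable_const B) fun y => hgbd _
        _ = B := by
            rw [integral_const, probReal_univ]
            simp
    have hosch : ∀ u v : A 0, |h u - h v| ≤ c 0 := by
      intro u v
      have hsub : h u - h v = ∫ y, (g (u, y) - g (v, y)) ∂ν' :=
        (integral_sub (hginner u) (hginner v)).symm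
      rw [hsub]
      calc |∫ y, (g (u, y) - g (v, y)) ∂ν'| ≤ ∫ y, |g (u, y) - g (v, y)| ∂ν' := by
            simpa [Real.norm_eq_abs] using
              norm_integral_le_integral_norm (fun y => g (u, y) - g (v, y)) (μ := ν')
        _ ≤ ∫ _y, c 0 ∂ν' := by
            refine integral_mono ((hginner u).sub (hginner v)).abs (integrable_const _) fun y => ?_
            refine hbd _ _ 0 fun j' hj' => ?_
            rcases Fin.eq_zero_or_eq_succ j' with rfl | ⟨k, rfl⟩
            · exact absurd rfl hj'
            · have hk : k.succ = (0 : Fin (n+1)).succAbove k := (Fin.zero_succAbove k).symm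
              rw [hk, (hco u y).2 k, (hco v y).2 k]
        _ = c 0 := by
            rw [integral_const, probReal_univ]
            simp
    -- the induction hypothesis, pointwise in the first coordinate
    set K : ℝ := t ^ 2 * (∑ j, c ((0 : Fin (n+1)).succAbove j) ^ 2) / 8 with hKdef
    have hIH : ∀ x0 : A 0, ∫ y, exp (t * g (x0, y)) ∂ν' ≤ exp (t * h x0 + K) := by
      intro x0
      exact ih (fun j => ν _) (fun y => g (x0, y)) (hgm.comp measurable_prodMk_left)
        (fun j => c ((0 : Fin (n+1)).succAbove j)) (hbd1 x0) t
    -- Fubini and the chain of bounds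
    have hfub : ∫ z, exp (t * g z) ∂((ν 0).prod ν')
        = ∫ x0, ∫ y, exp (t * g (x0, y)) ∂ν' ∂(ν 0) := integral_prod _ hFint
    have hint_left : Integrable (fun x0 => ∫ y, exp (t * g (x0, y)) ∂ν') (ν 0) :=
      hFint.integral_prod_left
    have hint_right : Integrable (fun x0 => exp (t * h x0 + K)) (ν 0) := by
      refine integrable_of_abs_le _ (((hhm.const_mul t).add_const K).exp)
        (C := exp (|t| * B + K)) fun x0 => ?_
      rw [abs_of_pos (exp_pos _)]
      refine exp_le_exp.2 (add_le_add_left ?_ K)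
      calc t * h x0 ≤ |t * h x0| := le_abs_self _
        _ = |t| * |h x0| := abs_mul _ _
        _ ≤ |t| * B := mul_le_mul_of_nonneg_left (hhbd x0) (abs_nonneg t)
    have hmid : ∫ x0, ∫ y, exp (t * g (x0, y)) ∂ν' ∂(ν 0) ≤ ∫ x0, exp (t * h x0 + K) ∂(ν 0) :=
      integral_mono hint_left hint_right hIH
    have hhoeff : ∫ x0, exp (t * h x0) ∂(ν 0)
        ≤ exp (t * (∫ x0, h x0 ∂(ν 0)) + t ^ 2 * (c 0) ^ 2 / 8) :=
      hoeffding_lemma (ν 0) hhm hosch t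
    have hmean2 : ∫ x0, h x0 ∂(ν 0) = ∫ z, g z ∂((ν 0).prod ν') :=
      (integral_prod _ hgint).symm
    have hsum : ∑ i : Fin (n+1), c i ^ 2
        = c 0 ^ 2 + ∑ j : Fin n, c ((0 : Fin (n+1)).succAbove j) ^ 2 := by
      rw [Fin.sum_univ_succ]
      congr 1
    calc ∫ x, exp (t * f x) ∂Measure.pi ν
        = ∫ x0, ∫ y, exp (t * g (x0, y)) ∂ν' ∂(ν 0) := by rw [hstep1, hfub]
      _ ≤ ∫ x0, exp (t * h x0 + K) ∂(ν 0) := hmid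
      _ = exp K * ∫ x0, exp (t * h x0) ∂(ν 0) := by
          rw [← integral_const_mul]
          congr 1; funext x0
          rw [← exp_add]; ring_nf
      _ ≤ exp K * exp (t * (∫ x0, h x0 ∂(ν 0)) + t ^ 2 * (c 0) ^ 2 / 8) :=
          mul_le_mul_of_nonneg_left hhoeff (exp_pos _).le
      _ = exp (t * ∫ x, f x ∂Measure.pi ν + t ^ 2 * (∑ i, c i ^ 2) / 8) := by
          rw [← exp_add, hmean2, ← hmean, hsum, hKdef]
          congr 1
          ring

open ProbabilityTheory

/-- The joint law of independent random variables is the product of the marginals. -/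
theorem joint_law_eq_pi {Ω : Type*} [MeasurableSpace Ω] (μ : Measure Ω)
    [IsProbabilityMeasure μ] {n : ℕ} {A : Fin n → Type u}
    [mA : ∀ i, MeasurableSpace (A i)]
    (X : ∀ i, Ω → A i) (hXm : ∀ i, Measurable (X i))
    (hindep : iIndepFun (m := mA) X μ) :
    μ.map (fun ω i => X i ω) = Measure.pi (fun i => μ.map (X i)) := by
  haveI : ∀ i, IsProbabilityMeasure (μ.map (X i)) :=
    fun i => Measure.isProbabilityMeasure_map (hXm i).aemeasurable
  have hmeas : Measurable (fun ω i => X i ω) := measurable_pi_lambda _ hXm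
  refine (Measure.pi_eq fun s hs => ?_).symm
  rw [Measure.map_apply hmeas (MeasurableSet.univ_pi hs)]
  have hpre : (fun ω i => X i ω) ⁻¹' Set.pi Set.univ s = ⋂ i, X i ⁻¹' s i := by
    ext ω; simp [Set.mem_pi]
  rw [hpre]
  have := hindep.measure_inter_preimage_eq_mul Finset.univ
    (sets := s) (fun i _ => hs i)
  simp only [Finset.mem_univ, Set.iInter_true, Set.iInter_iInter_eq_left] at this
  calc μ (⋂ i, X i ⁻¹' s i) = ∏ i, μ (X i ⁻¹' s i) := by
        rw [← this]
    _ = ∏ i, (μ.map (X i)) (s i) :=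
        Finset.prod_congr rfl fun i _ => (Measure.map_apply (hXm i) (hs i)).symm

/-- McDiarmid's bounded differences inequality: if X₁,…,Xₙ are independent and
f satisfies the bounded differences condition with constants cᵢ, then
P(f(X) − E f(X) > ε) ≤ exp(−2ε² / Σ cᵢ²). -/
theorem stmt_5 {Ω : Type*} [MeasurableSpace Ω] (μ : Measure Ω)
    [IsProbabilityMeasure μ] {n : ℕ} {A : Fin n → Type*}
    (mA : ∀ i, MeasurableSpace (A i))
    (X : ∀ i, Ω → A i) (hXm : ∀ i, Measurable (X i))
    (hindep : iIndepFun (m := mA) X μ)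
    (f : (∀ i, A i) → ℝ) (hf : Measurable f)
    (c : Fin n → ℝ)
    (hbd : ∀ (x x' : ∀ i, A i) (i : Fin n),
      (∀ j, j ≠ i → x j = x' j) → |f x - f x'| ≤ c i)
    (ε : ℝ) (hε : 0 < ε) :
    (μ {ω | f (fun i => X i ω) - ∫ ω', f (fun i => X i ω') ∂μ > ε}).toReal
      ≤ exp (-2 * ε ^ 2 / ∑ i, (c i) ^ 2) := by
  letI := mA
  set S : ℝ := ∑ i, c i ^ 2 with hSdef
  have hS0 : 0 ≤ S := Finset.sum_nonneg fun i _ => sq_nonneg _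
  rcases eq_or_lt_of_le hS0 with hS | hS
  · have : (-2 : ℝ) * ε ^ 2 / S = 0 := by rw [← hS, div_zero]
    rw [this, exp_zero]
    calc (μ _).toReal ≤ (μ Set.univ).toReal :=
          ENNReal.toReal_mono (measure_ne_top μ _) (measure_mono (Set.subset_univ _))
      _ = 1 := by rw [measure_univ]; simp
  -- main case
  haveI : ∀ i, IsProbabilityMeasure (μ.map (X i)) :=
    fun i => Measure.isProbabilityMeasure_map (hXm i).aemeasurable
  have hmeas : Measurable fun ω i => X i ω := measurable_pi_lambda _ hXm
  have hmap := joint_law_eq_pi μ X hXm hindep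
  set M : ℝ := ∫ ω', f (fun i => X i ω') ∂μ with hMdef
  have hMpi : M = ∫ x, f x ∂Measure.pi (fun i => μ.map (X i)) := by
    rw [← hmap, integral_map hmeas.aemeasurable hf.aestronglyMeasurable]
  obtain ⟨ω₀⟩ : Nonempty Ω := by
    by_contra hempty
    have : μ Set.univ = 0 := by
      simp [Set.univ_eq_empty_iff.2 (not_nonempty_iff.1 hempty)]
    simp [measure_univ] at this
  have hosc := osc_of_bdd_diff f c hbd
  set B : ℝ := |f (fun i => X i ω₀)| + ∑ i, c i with hBdef
  have hfbd : ∀ x, |f x| ≤ B := fun x => by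
    have := hosc x (fun i => X i ω₀)
    calc |f x| = |f x - f (fun i => X i ω₀) + f (fun i => X i ω₀)| := by ring_nf
      _ ≤ |f x - f (fun i => X i ω₀)| + |f (fun i => X i ω₀)| := abs_add_le _ _
      _ ≤ B := by rw [hBdef]; linarith
  have hfXint : Integrable (fun ω => f (fun i => X i ω)) μ :=
    integrable_of_abs_le _ (hf.comp hmeas) fun ω => hfbd _
  have hMbd : |M| ≤ B := by
    calc |M| ≤ ∫ ω, |f (fun i => X i ω)| ∂μ := by
          simpa [Real.norm_eq_abs] using
            norm_integral_le_integral_norm (fun ω => f (fun i => X i ω)) (μ := μ)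
      _ ≤ ∫ _ω, B ∂μ := integral_mono hfXint.abs (integrable_const B) fun ω => hfbd _
      _ = B := by rw [integral_const, probReal_univ]; simp
  set t : ℝ := 4 * ε / S with htdef
  have ht0 : 0 ≤ t := by positivity
  set Y : Ω → ℝ := fun ω => f (fun i => X i ω) - M with hYdef
  have hYm : Measurable Y := (hf.comp hmeas).sub_const M
  have hYbd : ∀ ω, |Y ω| ≤ 2 * B := fun ω => by
    have h1 := hfbd (fun i => X i ω)
    have h2 := abs_sub_abs_le_abs_sub (f (fun i => X i ω)) M
    calc |Y ω| = |f (fun i => X i ω) - M| := rfl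
      _ ≤ |f (fun i => X i ω)| + |M| := abs_sub _ _
      _ ≤ 2 * B := by linarith
  have h_int : Integrable (fun ω => exp (t * Y ω)) μ := by
    refine integrable_of_abs_le _ ((hYm.const_mul t).exp) (C := exp (t * (2 * B))) fun ω => ?_
    rw [abs_of_pos (exp_pos _)]
    refine exp_le_exp.2 ?_
    calc t * Y ω ≤ |t * Y ω| := le_abs_self _
      _ = t * |Y ω| := by rw [abs_mul, abs_of_nonneg ht0]
      _ ≤ t * (2 * B) := mul_le_mul_of_nonneg_left (hYbd ω) ht0
  -- the mgf bound
  have hmgf : mgf Y μ t ≤ exp (t ^ 2 * S / 8) := by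
    have h1 : mgf Y μ t = exp (-(t * M)) * ∫ ω, exp (t * f (fun i => X i ω)) ∂μ := by
      rw [mgf, ← integral_const_mul]
      congr 1; funext ω
      rw [← exp_add, hYdef]
      ring_nf
    have h2 : ∫ ω, exp (t * f (fun i => X i ω)) ∂μ
        = ∫ x, exp (t * f x) ∂Measure.pi (fun i => μ.map (X i)) := by
      rw [← hmap, integral_map hmeas.aemeasurable ((hf.const_mul t).exp).aestronglyMeasurable]
    have h3 := mgf_pi (fun i => μ.map (X i)) f hf c hbd t
    rw [h1, h2]
    calc exp (-(t * M)) * ∫ x, exp (t * f x) ∂Measure.pi (fun i => μ.map (X i))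
        ≤ exp (-(t * M)) * exp (t * ∫ x, f x ∂Measure.pi (fun i => μ.map (X i))
            + t ^ 2 * S / 8) := mul_le_mul_of_nonneg_left h3 (exp_pos _).le
      _ = exp (t ^ 2 * S / 8) := by
          rw [← exp_add, ← hMpi]
          congr 1; ring
  -- Chernoff
  have hchern := measure_ge_le_exp_mul_mgf (X := Y) (μ := μ) ε ht0 h_int
  have hsub : {ω | f (fun i => X i ω) - M > ε} ⊆ {ω | ε ≤ Y ω} := by
    intro ω hω
    simp only [Set.mem_setOf_eq] at hω ⊢
    exact le_of_lt hω
  have hnum : -t * ε + t ^ 2 * S / 8 = -2 * ε ^ 2 / S := by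
    rw [htdef]
    field_simp
    ring
  calc (μ {ω | f (fun i => X i ω) - M > ε}).toReal
      ≤ (μ {ω | ε ≤ Y ω}).toReal :=
        ENNReal.toReal_mono (measure_ne_top μ _) (measure_mono hsub)
    _ ≤ exp (-t * ε) * mgf Y μ t := hchern
    _ ≤ exp (-t * ε) * exp (t ^ 2 * S / 8) := mul_le_mul_of_nonneg_left hmgf (exp_pos _).le
    _ = exp (-2 * ε ^ 2 / S) := by rw [← exp_add, hnum]
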